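/- Let φ : X → Y be a continuous map between non-empty profinite spaces (compact, Hausdorff, totally disconnected) such that the image φ(X) has cardinality strictly smaller than 2^ℵ₀. Then there exists a non-empty open subset U of X such that the restriction of φ to U is constant. -/

import Mathlib

open Cardinal Set

lemma aux_split {X Y : Type*} [TopologicalSpace X] [TopologicalSpace Y]
    [CompactSpace Y] [T2Space Y] [TotallyDisconnectedSpace Y]
    (f : X → Y) (hf : Continuous f)
    (H : ∀ U : Set X, IsOpen U → U.Nonempty → ∃ a ∈ U, ∃ b ∈ U, f a ≠ f b)
    (V : Set X) (hV : IsClopen V) (hne : V.Nonempty) :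
    ∃ W : ({S : Set X // IsClopen S ∧ S.Nonempty} ×
        {S : Set X // IsClopen S ∧ S.Nonempty}),
      W.1.1 ⊆ V ∧ W.2.1 ⊆ V ∧ ∀ x ∈ W.1.1, ∀ y ∈ W.2.1, f x ≠ f y := by
  obtain ⟨a, ha, b, hb, hab⟩ := H V hV.isOpen hne
  have : TotallySeparatedSpace Y := loc_compact_t2_tot_disc_iff_tot_sep.mp inferInstance
  obtain ⟨C, hC, haC, hbC⟩ := exists_isClopen_of_totally_separated hab
  refine ⟨⟨⟨V ∩ f ⁻¹' C, hV.inter (hC.preimage hf), ⟨a, ha, haC⟩⟩,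
    ⟨V ∩ f ⁻¹' Cᶜ, hV.inter (hC.compl.preimage hf), ⟨b, hb, hbC⟩⟩⟩,
    inter_subset_left, inter_subset_left, ?_⟩
  rintro x ⟨-, hx⟩ y ⟨-, hy⟩ hxy
  exact hy (hxy ▸ hx)

universe u v

lemma aux_continuum {X : Type u} {Y : Type v} [TopologicalSpace X] [TopologicalSpace Y]
    [CompactSpace X] [T2Space X] [Nonempty X]
    [CompactSpace Y] [T2Space Y] [TotallyDisconnectedSpace Y]
    (f : X → Y) (hf : Continuous f)
    (H : ∀ U : Set X, IsOpen U → U.Nonempty → ∃ a ∈ U, ∃ b ∈ U, f a ≠ f b) :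
    Cardinal.continuum ≤ Cardinal.mk (Set.range f) := by
  classical
  choose step h1 h2 h3 using aux_split f hf H
  -- node : List Bool → clopen nonempty set
  let node : List Bool → {S : Set X // IsClopen S ∧ S.Nonempty} :=
    fun s => List.rec ⟨Set.univ, isClopen_univ, univ_nonempty⟩
      (fun b _ ih => if b then (step ih.1 ih.2.1 ih.2.2).2
        else (step ih.1 ih.2.1 ih.2.2).1) s
  have node_cons : ∀ (b : Bool) (s : List Bool),
      (node (b :: s)).1 ⊆ (node s).1 := by
    intro b s
    cases b
    · exact h1 (node s).1 (node s).2.1 (node s).2.2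
    · exact h2 (node s).1 (node s).2.1 (node s).2.2
  have node_disj : ∀ (s : List Bool),
      ∀ x ∈ (node (false :: s)).1, ∀ y ∈ (node (true :: s)).1, f x ≠ f y := by
    intro s
    exact h3 (node s).1 (node s).2.1 (node s).2.2
  -- reversed prefixes
  let pre : (ℕ → Bool) → ℕ → List Bool :=
    fun σ n => Nat.rec [] (fun m ih => σ m :: ih) n
  have pre_succ : ∀ σ n, pre σ (n + 1) = σ n :: pre σ n := fun _ _ => rfl
  have pre_eq : ∀ (σ τ : ℕ → Bool) (n : ℕ), (∀ m < n, σ m = τ m) →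
      pre σ n = pre τ n := by
    intro σ τ n
    induction n with
    | zero => intro _; rfl
    | succ k ih =>
      intro h
      rw [pre_succ, pre_succ, h k (Nat.lt_succ_self k),
        ih (fun m hm => h m (hm.trans (Nat.lt_succ_self k)))]
  -- pick a point in each branch
  have branch : ∀ σ : ℕ → Bool, ∃ x : X, ∀ n, x ∈ (node (pre σ n)).1 := by
    intro σ
    have hne : (⋂ n, (node (pre σ n)).1).Nonempty := by
      apply IsCompact.nonempty_iInter_of_sequence_nonempty_isCompact_isClosed
      · intro n; rw [pre_succ]; exact node_cons _ _
      · intro n; exact (node (pre σ n)).2.2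
      · exact ((node (pre σ 0)).2.1.isClosed).isCompact
      · intro n; exact (node (pre σ n)).2.1.isClosed
    obtain ⟨x, hx⟩ := hne
    exact ⟨x, fun n => Set.mem_iInter.mp hx n⟩
  choose pt hpt using branch
  -- injectivity
  have inj : Function.Injective (fun σ : ℕ → Bool => f (pt σ)) := by
    intro σ τ hst
    by_contra hne
    have hex : ∃ n, σ n ≠ τ n := Function.ne_iff.mp hne
    have hn : σ (Nat.find hex) ≠ τ (Nat.find hex) := Nat.find_spec hex
    set n := Nat.find hex
    have hpre : pre σ n = pre τ n :=
      pre_eq σ τ n (fun m hm => not_not.mp (Nat.find_min hex hm))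
    have hxσ : pt σ ∈ (node (σ n :: pre σ n)).1 := by
      rw [← pre_succ]; exact hpt σ (n + 1)
    have hxτ : pt τ ∈ (node (τ n :: pre σ n)).1 := by
      rw [hpre, ← pre_succ]; exact hpt τ (n + 1)
    cases hσ : σ n with
    | false =>
      have hτ : τ n = true := by
        cases hτ' : τ n
        · exact absurd (hσ.trans hτ'.symm) hn
        · rfl
      exact node_disj (pre σ n) (pt σ) (by rwa [hσ] at hxσ) (pt τ)
        (by rwa [hτ] at hxτ) hst
    | true =>
      have hτ : τ n = false := by
        cases hτ' : τ n
        · rfl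
        · exact absurd (hσ.trans hτ'.symm) hn
      exact node_disj (pre σ n) (pt τ) (by rwa [hτ] at hxτ) (pt σ)
        (by rwa [hσ] at hxσ) hst.symm
  have hμ : Cardinal.mk (ULift.{v} (ℕ → Bool)) = Cardinal.continuum := by
    have h0 : Cardinal.mk (ℕ → Bool) = Cardinal.continuum := by
      rw [Cardinal.mk_arrow, Cardinal.mk_bool, Cardinal.mk_nat, Cardinal.lift_id,
        Cardinal.lift_id, Cardinal.two_power_aleph0]
    rw [Cardinal.mk_uLift, h0, Cardinal.lift_continuum]
  rw [← hμ]
  exact Cardinal.mk_le_of_injective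
    (f := fun σ : ULift.{v} (ℕ → Bool) =>
      (⟨f (pt σ.down), Set.mem_range_self _⟩ : Set.range f))
    (fun σ τ h => congrArg ULift.up (inj (congrArg Subtype.val h)))

/-- If a continuous map between non-empty profinite spaces has image of
cardinality strictly smaller than the continuum, then it is constant on some
non-empty open subset. -/
theorem stmt4 {X Y : Type*} [TopologicalSpace X] [TopologicalSpace Y]
    [CompactSpace X] [T2Space X] [TotallyDisconnectedSpace X]
    [CompactSpace Y] [T2Space Y] [TotallyDisconnectedSpace Y]
    [Nonempty X] [Nonempty Y]
    (f : X → Y) (hf : Continuous f)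
    (hcard : Cardinal.mk (Set.range f) < Cardinal.continuum) :
    ∃ U : Set X, IsOpen U ∧ U.Nonempty ∧ ∀ a ∈ U, ∀ b ∈ U, f a = f b := by
  by_contra h
  push_neg at h
  refine hcard.not_ge (aux_continuum f hf ?_)
  intro U hU hUne
  obtain ⟨a, ha, b, hb, hab⟩ := h U hU hUne
  exact ⟨a, ha, b, hb, hab⟩
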